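/- Let M be an ordered matroid on E with top base T = MaxBas(E) = E \ Act_M(E). If F is a spanning subset of E and T ⊆ F, then T ∩ Act_M(F) = ∅ and hence MaxBas(F) = T. -/

import Mathlib

open Matroid Set

variable {α : Type*}

/-- A circuit: a minimal dependent subset of the ground set. -/
def mCircuit (M : Matroid α) (C : Set α) : Prop :=
  C ⊆ M.E ∧ ¬ M.Indep C ∧ ∀ D ⊂ C, M.Indep D

/-- e is active with respect to F: some circuit C ⊆ F ∪ {e} has e as its minimum. -/
def mAct [LinearOrder α] (M : Matroid α) (F : Set α) : Set α :=
  {e | ∃ C, mCircuit M C ∧ C ⊆ F ∪ {e} ∧ e ∈ C ∧ ∀ x ∈ C, e ≤ x}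

/-- The externally active elements with respect to F. -/
def mExt [LinearOrder α] (M : Matroid α) (F : Set α) : Set α :=
  mAct M F \ F

/-- Las Vergnas' external order on bases. -/
def extLE [LinearOrder α] (M : Matroid α) (A B : Set α) : Prop :=
  A ⊆ B ∪ mExt M B

/-- The lexicographically maximal base contained in a spanning set F. -/
def maxBas [LinearOrder α] (M : Matroid α) (F : Set α) : Set α :=
  F \ mAct M F

/-- Any element of a circuit is in the closure of the rest of the circuit. -/
lemma mCircuit.mem_closure_diff {M : Matroid α} {C : Set α} (hC : mCircuit M C) {e : α}
    (he : e ∈ C) : e ∈ M.closure (C \ {e}) := by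
  obtain ⟨hCE, hdep, hmin⟩ := hC
  have hI : M.Indep (C \ {e}) := hmin _ (sdiff_singleton_ssubset.mpr he)
  have hins : insert e (C \ {e}) = C := insert_diff_singleton.trans (insert_eq_of_mem he)
  have hni : ¬ M.Indep (insert e (C \ {e})) := by rw [hins]; exact hdep
  rw [hI.insert_indep_iff_of_notMem (by simp)] at hni
  have heE : e ∈ M.E := hCE he
  simpa [heE] using hni

/-- Any finite dependent subset of the ground set contains a circuit. -/
lemma exists_mCircuit_subset (M : Matroid α) {D : Set α} (hDE : D ⊆ M.E) (hfin : D.Finite)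
    (hdep : ¬ M.Indep D) : ∃ C ⊆ D, mCircuit M C := by
  obtain ⟨n, hn⟩ : ∃ n, D.ncard = n := ⟨_, rfl⟩
  induction n using Nat.strong_induction_on generalizing D with
  | _ n ih =>
    by_cases hall : ∀ D' ⊂ D, M.Indep D'
    · exact ⟨D, Subset.rfl, hDE, hdep, hall⟩
    · push_neg at hall
      obtain ⟨D', hD'ss, hD'dep⟩ := hall
      obtain ⟨C, hCD', hC⟩ := ih (D'.ncard) (hn ▸ Set.ncard_lt_ncard hD'ss hfin)
        (hD'ss.subset.trans hDE) (hfin.subset hD'ss.subset) hD'dep rfl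
      exact ⟨C, hCD'.trans hD'ss.subset, hC⟩

/-- A circuit has a minimum element, which is active with respect to the ground set. -/
lemma mCircuit.exists_min {M : Matroid α} [LinearOrder α] [M.Finite] {C : Set α}
    (hC : mCircuit M C) : ∃ m ∈ C, m ∈ mAct M M.E ∧ ∀ y ∈ C, m ≤ y := by
  have hfin : C.Finite := M.ground_finite.subset hC.1
  have hne : C.Nonempty := by
    rcases C.eq_empty_or_nonempty with rfl | h
    · exact absurd M.empty_indep hC.2.1
    · exact h
  obtain ⟨m, hmC, hmin⟩ : ∃ a ∈ C, ∀ a' ∈ C, id a' ≤ id a → id a = id a' := by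
    obtain ⟨a, ha, h⟩ := Set.exists_min_image C id hfin hne
    exact ⟨a, ha, fun b hb hba => le_antisymm (h b hb) hba⟩
  have hmin' : ∀ y ∈ C, m ≤ y := fun y hy => by
    by_contra h
    exact h (le_of_eq (hmin y hy (le_of_not_ge h)))
  exact ⟨m, hmC, ⟨C, hC, fun x hx => Or.inl (hC.1 hx), hmC, hmin'⟩, hmin'⟩

/-- Every element active w.r.t. the ground set lies in the closure of the top base. -/
lemma mem_closure_maxBas_of_act {M : Matroid α} [LinearOrder α] [M.Finite] :
    ∀ e ∈ mAct M M.E, e ∈ M.closure (maxBas M M.E) := by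
  have hTE : maxBas M M.E ⊆ M.E := diff_subset
  intro e he
  obtain ⟨n, hn⟩ : ∃ n, {y ∈ M.E | e < y}.ncard = n := ⟨_, rfl⟩
  induction n using Nat.strong_induction_on generalizing e with
  | _ n ih =>
    obtain ⟨C, hC, _, heC, hmin⟩ := he
    have hsub : C \ {e} ⊆ M.closure (maxBas M M.E) := by
      intro x hx
      have hxE : x ∈ M.E := hC.1 hx.1
      have hlt : e < x := lt_of_le_of_ne (hmin x hx.1) (fun h => hx.2 h.symm)
      by_cases hxT : x ∈ maxBas M M.E
      · exact M.subset_closure _ hTE hxT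
      · have hxact : x ∈ mAct M M.E := by
          by_contra h
          exact hxT ⟨hxE, h⟩
        refine ih {y ∈ M.E | x < y}.ncard ?_ x hxact rfl
        rw [← hn]
        refine Set.ncard_lt_ncard ⟨fun y hy => ⟨hy.1, hlt.trans hy.2⟩, ?_⟩
          (M.ground_finite.subset (sep_subset _ _))
        exact fun hss => absurd (hss ⟨hxE, hlt⟩).2 (lt_irrefl x)
    exact M.closure_subset_closure_of_subset_closure hsub (hC.mem_closure_diff heC)

theorem maxBas_eq_top [LinearOrder α] (M : Matroid α) [M.Finite]
    (F : Set α) (hF : F ⊆ M.E) (hsp : ∃ B, M.IsBase B ∧ B ⊆ F)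
    (hT : maxBas M M.E ⊆ F) :
    maxBas M M.E ∩ mAct M F = ∅ ∧ maxBas M F = maxBas M M.E := by
  have hTE : maxBas M M.E ⊆ M.E := diff_subset
  -- active w.r.t. F implies active w.r.t. the ground set
  have hFE : mAct M F ⊆ mAct M M.E := by
    rintro e ⟨C, hC, _, heC, hmin⟩
    exact ⟨C, hC, fun x hx => Or.inl (hC.1 hx), heC, hmin⟩
  have h1 : maxBas M M.E ∩ mAct M F = ∅ := by
    ext x
    simp only [mem_inter_iff, mem_empty_iff_false, iff_false, not_and]
    exact fun hx hact => hx.2 (hFE hact)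
  refine ⟨h1, ?_⟩
  ext x
  constructor
  · rintro ⟨hxF, hxact⟩
    refine ⟨hF hxF, fun hxactE => ?_⟩
    -- x is active w.r.t. M.E, derive x active w.r.t. F, contradiction
    have hxcl : x ∈ M.closure (maxBas M M.E) := mem_closure_maxBas_of_act x hxactE
    have hxT : x ∉ maxBas M M.E := fun h => h.2 hxactE
    have hdep : ¬ M.Indep (insert x (maxBas M M.E)) := by
      intro hind
      have hI : M.Indep (maxBas M M.E) := hind.subset (subset_insert _ _)
      rw [hI.insert_indep_iff_of_notMem hxT] at hind
      exact hind.2 hxcl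
    obtain ⟨C, hCsub, hC⟩ := exists_mCircuit_subset M
      (insert_subset (hF hxF) hTE)
      ((M.ground_finite.subset hTE).insert x) hdep
    obtain ⟨m, hmC, hmact, hmmin⟩ := hC.exists_min
    have hmx : m = x := by
      by_contra h
      have hmT : m ∈ maxBas M M.E := (hCsub hmC).resolve_left h
      exact hmT.2 hmact
    rw [hmx] at hmC hmmin
    exact hxact ⟨C, hC, hCsub.trans (by
      rw [union_singleton]
      exact insert_subset_insert hT), hmC, hmmin⟩
  · intro hx
    refine ⟨hT hx, fun hact => ?_⟩
    have : x ∈ maxBas M M.E ∩ mAct M F := ⟨hx, hact⟩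
    rw [h1] at this
    exact this
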